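/- Under the conditions of the association lemma (independent L̄₁, L̄₂ with CCDFs e^{−Λⱼ((0,l])}, densities λⱼ, association event {L̄₂ ≥ Ω L̄₁} with probability A₁ > 0), the conditional PDF of the serving pathloss L* = L̄₁ given the association event is f(l) = (1/A₁) e^{−Λ₂((0,Ωl]) − Λ₁((0,l])} λ₁(l) for l > 0. -/

import Mathlib

open Real MeasureTheory ProbabilityTheory Set Filter
open scoped ENNReal


lemma aux_integrableOn_of_ccdf {α : Type*} [MeasurableSpace α] (P : Measure α)
    [IsProbabilityMeasure P] (L : α → ℝ) (hM : Measurable L) (Lam lam : ℝ → ℝ)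
    (hLam : ∀ l : ℝ, 0 ≤ l → Lam l = ∫ t in (0:ℝ)..l, lam t)
    (hccdf : ∀ l : ℝ, 0 ≤ l → (P {ω | l < L ω}).toReal = Real.exp (-Lam l)) :
    ∀ l : ℝ, IntegrableOn lam (Ioc 0 l) := by
  by_contra h
  push_neg at h
  obtain ⟨b, hb⟩ := h
  have hb0 : 0 < b := by
    by_contra hb0
    push_neg at hb0
    rw [Set.Ioc_eq_empty (by exact fun hlt => absurd (hlt.trans_le hb0) (lt_irrefl 0))] at hb
    exact hb (integrableOn_empty)
  have key : ∀ n : ℕ, P {ω | (b + n : ℝ) < L ω} = 1 := by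
    intro n
    have hbn : (0:ℝ) ≤ b + n := by positivity
    have hni : ¬ IntegrableOn lam (Ioc 0 (b + n)) := by
      intro hI
      exact hb (hI.mono_set (Ioc_subset_Ioc_right (by linarith [Nat.cast_nonneg (α := ℝ) n])))
    have hLz : Lam (b + n) = 0 := by
      rw [hLam _ hbn, intervalIntegral.integral_of_le hbn]
      exact integral_undef hni
    have := hccdf _ hbn
    rw [hLz, neg_zero, Real.exp_zero] at this
    rwa [ENNReal.toReal_eq_one_iff] at this
  have hmeas : ∀ n : ℕ, NullMeasurableSet {ω | (b + n : ℝ) < L ω} P := by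
    intro n
    exact (measurableSet_lt measurable_const hM).nullMeasurableSet
  have hanti : Antitone (fun n : ℕ => {ω | (b + n : ℝ) < L ω}) := by
    intro m n hmn ω hω
    simp only [Set.mem_setOf_eq] at hω ⊢
    have : (b + m : ℝ) ≤ b + n := by
      have := (Nat.cast_le (α := ℝ)).2 hmn; linarith
    linarith
  have hiInter : ⋂ n : ℕ, {ω | (b + n : ℝ) < L ω} = ∅ := by
    ext ω
    simp only [Set.mem_iInter, Set.mem_setOf_eq, Set.mem_empty_iff_false, iff_false, not_forall,
      not_lt]
    obtain ⟨n, hn⟩ := exists_nat_gt (L ω - b)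
    exact ⟨n, by linarith⟩
  have htend := tendsto_measure_iInter_atTop (μ := P) hmeas hanti ⟨0, measure_ne_top _ _⟩
  rw [hiInter] at htend
  simp only [measure_empty] at htend
  have h10 : (1 : ℝ≥0∞) = 0 := by
    apply tendsto_nhds_unique _ htend
    have heq : (⇑P ∘ fun i : ℕ => {ω | (b + i : ℝ) < L ω}) = fun _ => (1:ℝ≥0∞) := funext key
    rw [heq]
    exact tendsto_const_nhds
  exact one_ne_zero h10

lemma aux_key_slice (lamE : ℝ → ℝ≥0∞)
    (hfin : ∀ l : ℝ, volume.withDensity lamE (Ioc 0 l) ≠ ∞)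
    (a b u : ℝ) (ha : 0 ≤ a) (hab : a ≤ b) (hu : 0 < u) :
    volume.withDensity lamE
        (Ioc a b ∩ {t : ℝ | volume.withDensity lamE (Ioc 0 t) < ENNReal.ofReal u})
      = volume (Ioc (volume.withDensity lamE (Ioc 0 a)).toReal
          (volume.withDensity lamE (Ioc 0 b)).toReal ∩ Iio u) := by
  set ν := volume.withDensity lamE with hν
  have hatom : ∀ x : ℝ, ν {x} = 0 := by
    intro x
    rw [hν, withDensity_apply _ (measurableSet_singleton x)]
    have hz : volume.restrict ({x} : Set ℝ) = 0 := by
      rw [Measure.restrict_eq_zero]; exact Real.volume_singleton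
    rw [hz, lintegral_zero_measure]
  have hmono : ∀ {s t : ℝ}, s ≤ t → ν (Ioc 0 s) ≤ ν (Ioc 0 t) :=
    fun hst => measure_mono (Ioc_subset_Ioc_right hst)
  have hdiff : ∀ {s t : ℝ}, 0 ≤ s → s ≤ t → ν (Ioc s t) = ν (Ioc 0 t) - ν (Ioc 0 s) := by
    intro s t hs hst
    apply ENNReal.eq_sub_of_add_eq (hfin s)
    rw [add_comm, ← measure_union (Set.Ioc_disjoint_Ioc_of_le le_rfl) measurableSet_Ioc,
      Set.Ioc_union_Ioc_eq_Ioc hs hst]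
  set A := (ν (Ioc 0 a)).toReal with hA
  set B := (ν (Ioc 0 b)).toReal with hB
  have hAeq : ν (Ioc 0 a) = ENNReal.ofReal A := (ENNReal.ofReal_toReal (hfin a)).symm
  have hBeq : ν (Ioc 0 b) = ENNReal.ofReal B := (ENNReal.ofReal_toReal (hfin b)).symm
  have hA0 : 0 ≤ A := ENNReal.toReal_nonneg
  have hAB : A ≤ B := ENNReal.toReal_mono (hfin b) (hmono hab)
  rcases le_or_gt u A with huA | hAu
  · have h1 : Ioc a b ∩ {t : ℝ | ν (Ioc 0 t) < ENNReal.ofReal u} = ∅ := by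
      ext t
      simp only [mem_inter_iff, mem_Ioc, mem_setOf_eq, mem_empty_iff_false, iff_false, not_and]
      rintro ⟨hat, htb⟩
      refine not_lt.2 ?_
      calc ENNReal.ofReal u ≤ ENNReal.ofReal A := ENNReal.ofReal_le_ofReal huA
        _ = ν (Ioc 0 a) := hAeq.symm
        _ ≤ ν (Ioc 0 t) := hmono hat.le
    have h2 : Ioc A B ∩ Iio u = ∅ := by
      ext v
      simp only [mem_inter_iff, mem_Ioc, mem_Iio, mem_empty_iff_false, iff_false, not_and]
      rintro ⟨hAv, _⟩
      linarith
    rw [h1, h2, measure_empty, measure_empty]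
  rcases lt_or_ge B u with hBu | huB
  · have h1 : Ioc a b ∩ {t : ℝ | ν (Ioc 0 t) < ENNReal.ofReal u} = Ioc a b := by
      refine inter_eq_left.2 fun t ht => ?_
      have h1' : ν (Ioc 0 t) ≤ ENNReal.ofReal B := hBeq ▸ hmono ht.2
      exact lt_of_le_of_lt h1' ((ENNReal.ofReal_lt_ofReal_iff hu).2 hBu)
    have h2 : Ioc A B ∩ Iio u = Ioc A B := inter_eq_left.2 fun v hv => lt_of_le_of_lt hv.2 hBu
    rw [h1, h2, Real.volume_Ioc, hdiff ha hab, hAeq, hBeq,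
      ← ENNReal.ofReal_sub _ hA0]
  · -- main case : A < u ≤ B
    set T := {t : ℝ | t ∈ Icc a b ∧ ν (Ioc 0 t) < ENNReal.ofReal u} with hT
    have haT : a ∈ T := by
      refine ⟨⟨le_refl a, hab⟩, ?_⟩
      rw [hAeq]
      exact (ENNReal.ofReal_lt_ofReal_iff hu).2 hAu
    have hTne : T.Nonempty := ⟨a, haT⟩
    have hTbdd : BddAbove T := ⟨b, fun t ht => ht.1.2⟩
    set s := sSup T with hs
    have has : a ≤ s := le_csSup hTbdd haT
    have hsb : s ≤ b := csSup_le hTne fun t ht => ht.1.2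
    -- (i) ν (Ioc 0 s) ≤ ofReal u
    have hub : ν (Ioc 0 s) ≤ ENNReal.ofReal u := by
      have hIoo : ν (Ioc 0 s) ≤ ν (Ioo 0 s) := by
        calc ν (Ioc 0 s) ≤ ν (Ioo 0 s ∪ {s}) := measure_mono (by
              intro x hx
              rcases eq_or_lt_of_le hx.2 with h | h
              · exact Or.inr (by simp [h])
              · exact Or.inl ⟨hx.1, h⟩)
          _ ≤ ν (Ioo 0 s) + ν {s} := measure_union_le _ _
          _ = ν (Ioo 0 s) := by rw [hatom, add_zero]
      refine le_trans hIoo ?_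
      have hch : ∀ n : ℕ, ∃ t ∈ T, s - 1 / (n + 1) < t := by
        intro n
        apply exists_lt_of_lt_csSup hTne
        have : (0:ℝ) < 1 / (n + 1) := by positivity
        linarith
      choose t htT htlt using hch
      have hcover : Ioo 0 s ⊆ ⋃ n : ℕ, Ioc 0 (t n) := by
        intro x hx
        obtain ⟨n, hn⟩ := exists_nat_one_div_lt (show (0:ℝ) < s - x by linarith [hx.2])
        exact Set.mem_iUnion.2 ⟨n, ⟨hx.1, by nlinarith [htlt n]⟩⟩
      have hdir : Directed (· ⊆ ·) fun n : ℕ => Ioc (0:ℝ) (t n) := by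
        intro m n
        rcases le_total (t m) (t n) with h | h
        · exact ⟨n, Ioc_subset_Ioc_right h, subset_rfl⟩
        · exact ⟨m, subset_rfl, Ioc_subset_Ioc_right h⟩
      calc ν (Ioo 0 s) ≤ ν (⋃ n : ℕ, Ioc 0 (t n)) := measure_mono hcover
        _ = ⨆ n : ℕ, ν (Ioc 0 (t n)) := hdir.measure_iUnion
        _ ≤ ENNReal.ofReal u := iSup_le fun n => (htT n).2.le
    -- (ii) ofReal u ≤ ν (Ioc 0 s)
    have hlb : ENNReal.ofReal u ≤ ν (Ioc 0 s) := by
      rcases eq_or_lt_of_le hsb with hsb' | hsb'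
      · rw [hsb', hBeq]
        exact ENNReal.ofReal_le_ofReal huB
      · set w : ℕ → ℝ := fun n => s + (b - s) / (n + 1) with hw
        have hws : ∀ n, s < w n := by
          intro n
          have : (0:ℝ) < (b - s) / (n + 1) := by
            apply div_pos (by linarith) (by positivity)
          simp only [hw]; linarith
        have hwb : ∀ n, w n ≤ b := by
          intro n
          have h1 : (b - s) / (n + 1) ≤ (b - s) := by
            rw [div_le_iff₀ (by positivity : (0:ℝ) < (n:ℝ) + 1)]
            nlinarith [Nat.cast_nonneg (α := ℝ) n]
          simp only [hw]; linarith
        have hwT : ∀ n, ν (Ioc 0 (w n)) ≥ ENNReal.ofReal u := by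
          intro n
          by_contra hc
          push_neg at hc
          have : w n ∈ T := ⟨⟨by linarith [hws n], hwb n⟩, hc⟩
          exact absurd (le_csSup hTbdd this) (not_le.2 (hws n))
        have hwanti : Antitone fun n : ℕ => Ioc (0:ℝ) (w n) := by
          intro m n hmn
          apply Ioc_subset_Ioc_right
          simp only [hw]
          have h1 : ((m:ℝ) + 1) ≤ (n:ℝ) + 1 := by
            have := (Nat.cast_le (α := ℝ)).2 hmn; linarith
          have h2 : (b - s) / ((n:ℝ) + 1) ≤ (b - s) / ((m:ℝ) + 1) :=
            div_le_div_of_nonneg_left (by linarith) (by positivity) h1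
          linarith
        have hwinter : ⋂ n : ℕ, Ioc (0:ℝ) (w n) = Ioc 0 s := by
          ext x
          simp only [mem_iInter, mem_Ioc]
          constructor
          · rintro h
            refine ⟨(h 0).1, ?_⟩
            by_contra hxs
            push_neg at hxs
            have hbs : (0:ℝ) < b - s := by linarith
            obtain ⟨n, hn⟩ := exists_nat_one_div_lt
              (show (0:ℝ) < (x - s) / (b - s) by
                apply div_pos (by linarith) hbs)
            have h3 : (b - s) / ((n:ℝ) + 1) < x - s := by
              have h4 := mul_lt_mul_of_pos_right hn hbs
              rw [div_mul_cancel₀ _ (ne_of_gt hbs), one_div_mul_eq_div] at h4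
              exact h4
            have := (h n).2
            simp only [hw] at this
            linarith
          · rintro ⟨hx0, hxs⟩ 
            intro n
            exact ⟨hx0, le_trans hxs (hws n).le⟩
        have htends := tendsto_measure_iInter_atTop (μ := ν)
          (fun n => measurableSet_Ioc.nullMeasurableSet) hwanti
          ⟨0, by
            refine ne_top_of_le_ne_top (hfin (w 0)) (le_refl _)⟩
        rw [hwinter] at htends
        exact ge_of_tendsto htends (Filter.Eventually.of_forall hwT)
    have hsu : ν (Ioc 0 s) = ENNReal.ofReal u := le_antisymm hub hlb
    -- squeeze for the set
    set S := Ioc a b ∩ {t : ℝ | ν (Ioc 0 t) < ENNReal.ofReal u} with hS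
    have hSsub : S ⊆ Ioc a s := by
      rintro t ⟨ht1, ht2⟩
      exact ⟨ht1.1, le_csSup hTbdd ⟨⟨ht1.1.le, ht1.2⟩, ht2⟩⟩
    have hSsup : Ioo a s ⊆ S := by
      rintro t ⟨hat, hts⟩
      obtain ⟨t', ht'T, htt'⟩ := exists_lt_of_lt_csSup hTne hts
      exact ⟨⟨hat, le_trans hts.le hsb⟩, lt_of_le_of_lt (hmono htt'.le) ht'T.2⟩
    have hIooIoc : ν (Ioo a s) = ν (Ioc a s) := by
      apply le_antisymm (measure_mono Ioo_subset_Ioc_self)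
      calc ν (Ioc a s) ≤ ν (Ioo a s ∪ {s}) := measure_mono (by
            intro x hx
            rcases eq_or_lt_of_le hx.2 with h | h
            · exact Or.inr (by simp [h])
            · exact Or.inl ⟨hx.1, h⟩)
        _ ≤ ν (Ioo a s) + ν {s} := measure_union_le _ _
        _ = ν (Ioo a s) := by rw [hatom, add_zero]
    have hνS : ν S = ENNReal.ofReal (u - A) := by
      have h1 : ν S ≤ ν (Ioc a s) := measure_mono hSsub
      have h2 : ν (Ioc a s) ≤ ν S := hIooIoc ▸ measure_mono hSsup
      have h3 : ν S = ν (Ioc a s) := le_antisymm h1 h2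
      rw [h3, hdiff ha has, hsu, hAeq, ← ENNReal.ofReal_sub _ hA0]
    have hRHS : Ioc A B ∩ Iio u = Ioo A u := by
      ext v
      simp only [mem_inter_iff, mem_Ioc, mem_Iio, mem_Ioo]
      exact ⟨fun h => ⟨h.1.1, h.2⟩, fun h => ⟨⟨h.1, le_trans h.2.le huB⟩, h.2⟩⟩
    rw [hνS, hRHS, Real.volume_Ioo]

lemma aux_exp_Ioi (c : ℝ) :
    ∫⁻ u in Ioi c, ENNReal.ofReal (Real.exp (-u)) = ENNReal.ofReal (Real.exp (-c)) := by
  have hi : IntegrableOn (fun u : ℝ => Real.exp (-u)) (Ioi c) := by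
    have := exp_neg_integrableOn_Ioi c (one_pos)
    simpa using this
  rw [← ofReal_integral_eq_lintegral_ofReal hi
    (Filter.Eventually.of_forall fun u => (Real.exp_pos _).le), integral_exp_neg_Ioi]

lemma aux_exp_Ioi_indicator {c : ℝ} (hc : 0 ≤ c) :
    ∫⁻ u in Ioi (0:ℝ), (Ioi c).indicator (fun u => ENNReal.ofReal (Real.exp (-u))) u
      = ENNReal.ofReal (Real.exp (-c)) := by
  rw [lintegral_indicator measurableSet_Ioi, Measure.restrict_restrict measurableSet_Ioi,
    Set.Ioi_inter_Ioi, max_eq_left hc, aux_exp_Ioi]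

lemma aux_ftc_exp (lam : ℝ → ℝ) (hm : Measurable lam) (h0 : ∀ x, 0 ≤ lam x)
    (hint : ∀ l : ℝ, IntegrableOn lam (Ioc 0 l) volume) (a b : ℝ) (ha : 0 ≤ a) (hab : a ≤ b) :
    ∫ t in Ioc a b, Real.exp (-∫ s in Ioc 0 t, lam s) * lam t
      = Real.exp (-∫ s in Ioc 0 a, lam s) - Real.exp (-∫ s in Ioc 0 b, lam s) := by
  set Lam : ℝ → ℝ := fun t => ∫ s in Ioc 0 t, lam s with hLam
  have hLnn : ∀ t, 0 ≤ Lam t := fun t => setIntegral_nonneg measurableSet_Ioc fun x _ => h0 x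
  have hLmono : Monotone Lam := by
    intro s t hst
    exact setIntegral_mono_set (hint t)
      (Filter.Eventually.of_forall fun x => h0 x)
      (HasSubset.Subset.eventuallyLE (Ioc_subset_Ioc_right hst))
  have hLmeas : Measurable Lam := hLmono.measurable
  set lamE : ℝ → ℝ≥0∞ := fun t => ENNReal.ofReal (lam t) with hlamE
  have hlamEm : Measurable lamE := hm.ennreal_ofReal
  set ν := volume.withDensity lamE with hν
  have hνIoc : ∀ t : ℝ, ν (Ioc 0 t) = ENNReal.ofReal (Lam t) := by
    intro t
    rw [hν, withDensity_apply _ measurableSet_Ioc,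
      ← ofReal_integral_eq_lintegral_ofReal (hint t)
        (Filter.Eventually.of_forall fun x => h0 x)]
  have hfin : ∀ l : ℝ, ν (Ioc 0 l) ≠ ∞ := fun l => by
    rw [hνIoc]; exact ENNReal.ofReal_ne_top
  set A := Lam a with hA
  set B := Lam b with hB
  have hAB : A ≤ B := hLmono hab
  have hA0 : 0 ≤ A := hLnn a
  -- ENNReal chain
  have main : ∫⁻ t in Ioc a b, ENNReal.ofReal (Real.exp (-Lam t) * lam t)
      = ENNReal.ofReal (Real.exp (-A) - Real.exp (-B)) := by
    have step1 : ∫⁻ t in Ioc a b, ENNReal.ofReal (Real.exp (-Lam t) * lam t)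
        = ∫⁻ t in Ioc a b, ∫⁻ u in Ioi (0:ℝ),
            ({p : ℝ × ℝ | Lam p.1 < p.2}.indicator
              (fun p => ENNReal.ofReal (Real.exp (-p.2)) * ENNReal.ofReal (lam p.1)) (t, u)) := by
      apply lintegral_congr
      intro t
      have hmi : Measurable fun u : ℝ => ENNReal.ofReal (Real.exp (-u)) :=
        (Real.measurable_exp.comp measurable_neg).ennreal_ofReal
      rw [ENNReal.ofReal_mul (Real.exp_pos _).le, ← aux_exp_Ioi_indicator (hLnn t),
        ← lintegral_mul_const'' _
          ((hmi.indicator measurableSet_Ioi).aemeasurable)]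
      apply lintegral_congr
      intro u
      by_cases h : Lam t < u
      · simp [Set.indicator_of_mem, h, Set.mem_Ioi, Set.mem_setOf_eq]
      · simp [Set.indicator_of_notMem, h, Set.mem_Ioi, Set.mem_setOf_eq]
    rw [step1]
    have hSmeas : MeasurableSet {p : ℝ × ℝ | Lam p.1 < p.2} :=
      measurableSet_lt (hLmeas.comp measurable_fst) measurable_snd
    set F1 : ℝ → ℝ → ℝ≥0∞ := fun t u =>
      ({p : ℝ × ℝ | Lam p.1 < p.2}.indicator
        (fun p => ENNReal.ofReal (Real.exp (-p.2)) * ENNReal.ofReal (lam p.1)) (t, u)) with hF1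
    have hF1meas : Measurable (Function.uncurry F1) := by
      have huncur : Function.uncurry F1 = {p : ℝ × ℝ | Lam p.1 < p.2}.indicator
          (fun p => ENNReal.ofReal (Real.exp (-p.2)) * ENNReal.ofReal (lam p.1)) := by
        ext p; cases p; rfl
      rw [huncur]
      exact Measurable.indicator
        (((Real.measurable_exp.comp measurable_snd.neg).ennreal_ofReal).mul
          ((hm.comp measurable_fst).ennreal_ofReal)) hSmeas
    rw [lintegral_lintegral_swap hF1meas.aemeasurable]
    have inner1 : ∀ u : ℝ, u ∈ Ioi (0:ℝ) → (∫⁻ t in Ioc a b, F1 t u)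
        = ENNReal.ofReal (Real.exp (-u)) * volume (Ioc A B ∩ Iio u) := by
      intro u hu
      have hu0 : (0:ℝ) < u := hu
      have hset : MeasurableSet {t : ℝ | Lam t < u} := measurableSet_lt hLmeas measurable_const
      have h1 : ∀ t : ℝ, F1 t u = ({t : ℝ | Lam t < u}).indicator
          (fun t => ENNReal.ofReal (Real.exp (-u)) * ENNReal.ofReal (lam t)) t := by
        intro t
        by_cases h : Lam t < u
        · simp only [hF1, Set.indicator_of_mem, h, Set.mem_setOf_eq]
        · simp only [hF1, Set.indicator_of_notMem, h, Set.mem_setOf_eq, not_false_iff]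
      rw [lintegral_congr h1, lintegral_indicator hset, Measure.restrict_restrict hset,
        lintegral_const_mul _ hm.ennreal_ofReal]
      congr 1
      rw [← withDensity_apply _ (hset.inter measurableSet_Ioc), Set.inter_comm]
      have hsetswap : Ioc a b ∩ {t : ℝ | Lam t < u}
          = Ioc a b ∩ {t : ℝ | ν (Ioc 0 t) < ENNReal.ofReal u} := by
        ext t
        simp only [Set.mem_inter_iff, Set.mem_setOf_eq, and_congr_right_iff]
        intro _
        rw [hνIoc t, ENNReal.ofReal_lt_ofReal_iff hu0]
      rw [hsetswap]
      have := aux_key_slice lamE hfin a b u ha hab hu0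
      rw [this, hνIoc a, hνIoc b, ENNReal.toReal_ofReal (hLnn a), ENNReal.toReal_ofReal (hLnn b)]
    rw [setLIntegral_congr_fun measurableSet_Ioi inner1]
    -- second Fubini
    have hS2meas : MeasurableSet {p : ℝ × ℝ | p.2 < p.1} :=
      measurableSet_lt measurable_snd measurable_fst
    set F2 : ℝ → ℝ → ℝ≥0∞ := fun u v =>
      ({p : ℝ × ℝ | p.2 < p.1}.indicator (fun p => ENNReal.ofReal (Real.exp (-p.1))) (u, v))
      with hF2
    have inner2 : ∀ u : ℝ, u ∈ Ioi (0:ℝ) →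
        ENNReal.ofReal (Real.exp (-u)) * volume (Ioc A B ∩ Iio u)
          = ∫⁻ v in Ioc A B, F2 u v := by
      intro u _
      have h1 : ∀ v : ℝ, F2 u v
          = (Iio u).indicator (fun _ => ENNReal.ofReal (Real.exp (-u))) v := by
        intro v
        by_cases h : v < u
        · simp only [hF2, Set.indicator_of_mem, h, Set.mem_setOf_eq, Set.mem_Iio]
        · simp only [hF2, Set.indicator_of_notMem, h, Set.mem_setOf_eq, Set.mem_Iio,
            not_false_iff]
      rw [lintegral_congr h1, lintegral_indicator measurableSet_Iio,
        Measure.restrict_restrict measurableSet_Iio, setLIntegral_const, Set.inter_comm]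
    rw [setLIntegral_congr_fun measurableSet_Ioi inner2]
    have hF2meas : Measurable (Function.uncurry F2) := by
      have huncur : Function.uncurry F2 = {p : ℝ × ℝ | p.2 < p.1}.indicator
          (fun p => ENNReal.ofReal (Real.exp (-p.1))) := by
        ext p; cases p; rfl
      rw [huncur]
      exact Measurable.indicator
        ((Real.measurable_exp.comp measurable_fst.neg).ennreal_ofReal) hS2meas
    rw [lintegral_lintegral_swap hF2meas.aemeasurable]
    have inner3 : ∀ v : ℝ, v ∈ Ioc A B → (∫⁻ u in Ioi (0:ℝ), F2 u v)
        = ENNReal.ofReal (Real.exp (-v)) := by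
      intro v hv
      have hv0 : 0 ≤ v := le_trans hA0 hv.1.le
      have h1 : ∀ u : ℝ, F2 u v
          = (Ioi v).indicator (fun u => ENNReal.ofReal (Real.exp (-u))) u := by
        intro u
        by_cases h : v < u
        · simp only [hF2, Set.indicator_of_mem, h, Set.mem_setOf_eq, Set.mem_Ioi]
        · simp only [hF2, Set.indicator_of_notMem, h, Set.mem_setOf_eq, Set.mem_Ioi,
            not_false_iff]
      rw [lintegral_congr h1, aux_exp_Ioi_indicator hv0]
    rw [setLIntegral_congr_fun measurableSet_Ioc inner3]
    have hie : IntegrableOn (fun v : ℝ => Real.exp (-v)) (Ioc A B) := by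
      have := exp_neg_integrableOn_Ioi (A - 1) (one_pos)
      apply IntegrableOn.mono_set (t := Ioi (A - 1)) _ (fun x hx => by
        simp only [Set.mem_Ioi]; linarith [hx.1])
      simpa using this
    rw [← ofReal_integral_eq_lintegral_ofReal hie
      (Filter.Eventually.of_forall fun v => (Real.exp_pos _).le)]
    congr 1
    rw [← intervalIntegral.integral_of_le hAB]
    have : (∫ v in A..B, Real.exp (-v)) = ∫ v in -B..(-A), Real.exp v :=
      intervalIntegral.integral_comp_neg fun x => Real.exp x
    rw [this, integral_exp]
  -- real conversion
  have hIntOn : IntegrableOn (fun t => Real.exp (-Lam t) * lam t) (Ioc a b) := by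
    apply Integrable.mono ((hint b).mono_set (Ioc_subset_Ioc_left ha))
    · exact ((Real.measurable_exp.comp hLmeas.neg).mul hm).aestronglyMeasurable
    · apply Filter.Eventually.of_forall
      intro t
      rw [Real.norm_eq_abs, Real.norm_eq_abs, abs_of_nonneg (mul_nonneg (Real.exp_pos _).le (h0 t)),
        abs_of_nonneg (h0 t)]
      calc Real.exp (-Lam t) * lam t ≤ 1 * lam t := by
            apply mul_le_mul_of_nonneg_right _ (h0 t)
            rw [Real.exp_le_one_iff]; linarith [hLnn t]
        _ = lam t := one_mul _
  have hJ := ofReal_integral_eq_lintegral_ofReal hIntOn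
    (Filter.Eventually.of_forall fun t => mul_nonneg (Real.exp_pos _).le (h0 t))
  rw [main] at hJ
  have hresnn : (0:ℝ) ≤ Real.exp (-A) - Real.exp (-B) := by
    have := Real.exp_le_exp.2 (neg_le_neg hAB)
    linarith
  have hJnn : (0:ℝ) ≤ ∫ t in Ioc a b, Real.exp (-Lam t) * lam t :=
    setIntegral_nonneg measurableSet_Ioc fun t _ => mul_nonneg (Real.exp_pos _).le (h0 t)
  exact (ENNReal.ofReal_eq_ofReal_iff hJnn hresnn).1 hJ

lemma aux_integrableOn_exp_mul (lam : ℝ → ℝ) (hm : Measurable lam) (h0 : ∀ x, 0 ≤ lam x)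
    (hint : ∀ l : ℝ, IntegrableOn lam (Ioc 0 l) volume) {a b : ℝ} (ha : 0 ≤ a) :
    IntegrableOn (fun t => Real.exp (-∫ s in Ioc 0 t, lam s) * lam t) (Ioc a b) := by
  set Lam : ℝ → ℝ := fun t => ∫ s in Ioc 0 t, lam s with hLam
  have hLnn : ∀ t, 0 ≤ Lam t := fun t => setIntegral_nonneg measurableSet_Ioc fun x _ => h0 x
  have hLmono : Monotone Lam := fun s t hst =>
    setIntegral_mono_set (hint t) (Filter.Eventually.of_forall fun x => h0 x)
      (HasSubset.Subset.eventuallyLE (Ioc_subset_Ioc_right hst))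
  have hLmeas : Measurable Lam := hLmono.measurable
  apply Integrable.mono ((hint b).mono_set (Ioc_subset_Ioc_left ha))
  · exact ((Real.measurable_exp.comp hLmeas.neg).mul hm).aestronglyMeasurable
  · apply Filter.Eventually.of_forall
    intro t
    rw [Real.norm_eq_abs, Real.norm_eq_abs,
      abs_of_nonneg (mul_nonneg (Real.exp_pos _).le (h0 t)), abs_of_nonneg (h0 t)]
    calc Real.exp (-Lam t) * lam t ≤ 1 * lam t := by
          apply mul_le_mul_of_nonneg_right _ (h0 t)
          rw [Real.exp_le_one_iff]; linarith [hLnn t]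
      _ = lam t := one_mul _

lemma aux_map_restrict_eq_withDensity {α : Type*} [MeasurableSpace α] (P : Measure α)
    [IsProbabilityMeasure P] (L : α → ℝ) (hM : Measurable L) (lam : ℝ → ℝ)
    (h0 : ∀ x, 0 ≤ lam x) (hm : Measurable lam)
    (hint : ∀ l : ℝ, IntegrableOn lam (Ioc 0 l) volume)
    (hccdf : ∀ l : ℝ, 0 ≤ l →
      (P {ω | l < L ω}).toReal = Real.exp (-∫ s in Ioc 0 l, lam s)) :
    (P.map L).restrict (Ioi 0)
      = volume.withDensity ((Ioi 0).indicator
          (fun t => ENNReal.ofReal (Real.exp (-∫ s in Ioc 0 t, lam s) * lam t))) := by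
  set Lam : ℝ → ℝ := fun t => ∫ s in Ioc 0 t, lam s with hLam
  have hLnn : ∀ t, 0 ≤ Lam t := fun t => setIntegral_nonneg measurableSet_Ioc fun x _ => h0 x
  have hLmono : Monotone Lam := fun s t hst =>
    setIntegral_mono_set (hint t) (Filter.Eventually.of_forall fun x => h0 x)
      (HasSubset.Subset.eventuallyLE (Ioc_subset_Ioc_right hst))
  have hLmeas : Measurable Lam := hLmono.measurable
  set μ := P.map L with hμ
  have : IsProbabilityMeasure μ := Measure.isProbabilityMeasure_map hM.aemeasurable
  have hIoi : ∀ c : ℝ, 0 ≤ c → μ (Ioi c) = ENNReal.ofReal (Real.exp (-Lam c)) := by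
    intro c hc
    rw [hμ, Measure.map_apply hM measurableSet_Ioi]
    have hpre : L ⁻¹' Ioi c = {ω | c < L ω} := rfl
    rw [hpre, ← ENNReal.ofReal_toReal (measure_ne_top P _), hccdf c hc]
  apply Measure.ext_of_Ioc'
  · intro a b _
    exact measure_ne_top _ _
  · intro a b hab
    set a' := max a 0 with ha'def
    have ha' : 0 ≤ a' := le_max_right a 0
    have hint1 : Ioc a b ∩ Ioi 0 = Ioc a' b := by
      ext x
      simp only [Set.mem_inter_iff, Set.mem_Ioc, Set.mem_Ioi, ha'def, max_lt_iff]
      tauto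
    rw [Measure.restrict_apply measurableSet_Ioc, hint1,
      withDensity_apply _ measurableSet_Ioc, lintegral_indicator measurableSet_Ioi,
      Measure.restrict_restrict measurableSet_Ioi]
    have hint2 : Ioi (0:ℝ) ∩ Ioc a b = Ioc a' b := by
      rw [Set.inter_comm]; exact hint1
    rw [hint2]
    rcases le_or_gt b a' with hba' | ha'b
    · rw [Set.Ioc_eq_empty (not_lt.2 hba'), Measure.restrict_empty, lintegral_zero_measure,
        measure_empty]
    · have hdiff : Ioc a' b = Ioi a' \ Ioi b := (Set.Ioi_diff_Ioi).symm
      have hLHS : μ (Ioc a' b) = ENNReal.ofReal (Real.exp (-Lam a') - Real.exp (-Lam b)) := by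
        rw [hdiff, measure_diff (Set.Ioi_subset_Ioi ha'b.le) measurableSet_Ioi.nullMeasurableSet
          (measure_ne_top μ _), hIoi a' ha', hIoi b (ha'.trans ha'b.le),
          ← ENNReal.ofReal_sub _ (Real.exp_pos _).le]
      rw [hLHS, ← ofReal_integral_eq_lintegral_ofReal
        (aux_integrableOn_exp_mul lam hm h0 hint ha')
        (Filter.Eventually.of_forall fun t => mul_nonneg (Real.exp_pos _).le (h0 t)),
        aux_ftc_exp lam hm h0 hint a' b ha' ha'b.le]

/-- Lemma 4: the conditional distribution of the serving pathloss
`L* = L̄₁` given association to tier 1 (the event `{L̄₂ ≥ Ω L̄₁}`) has density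
`f(l) = (1/A₁) e^{-Λ₂((0,Ωl]) - Λ₁((0,l])} λ₁(l)`, expressed through its CDF. -/
theorem serving_pathloss_conditional_pdf
    {α : Type*} [MeasurableSpace α] (P : Measure α) [IsProbabilityMeasure P]
    (L1 L2 : α → ℝ) (hMeas1 : Measurable L1) (hMeas2 : Measurable L2)
    (hIndep : IndepFun L1 L2 P)
    (hPos1 : ∀ᵐ ω ∂P, 0 < L1 ω) (hPos2 : ∀ᵐ ω ∂P, 0 < L2 ω)
    (Lam1 Lam2 lam1 lam2 : ℝ → ℝ)
    (hlam1 : ∀ x, 0 ≤ lam1 x) (hlam2 : ∀ x, 0 ≤ lam2 x)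
    (hlam1m : Measurable lam1) (hlam2m : Measurable lam2)
    (hLam1 : ∀ l : ℝ, 0 ≤ l → Lam1 l = ∫ t in (0:ℝ)..l, lam1 t)
    (hLam2 : ∀ l : ℝ, 0 ≤ l → Lam2 l = ∫ t in (0:ℝ)..l, lam2 t)
    (hccdf1 : ∀ l : ℝ, 0 ≤ l → (P {ω | l < L1 ω}).toReal = Real.exp (-Lam1 l))
    (hccdf2 : ∀ l : ℝ, 0 ≤ l → (P {ω | l < L2 ω}).toReal = Real.exp (-Lam2 l))
    (Om : ℝ) (hOm : 0 < Om)
    (A1 : ℝ)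
    (hA1 : A1 = ∫ l in Set.Ioi (0:ℝ),
        Real.exp (-Lam2 (Om * l) - Lam1 l) * lam1 l)
    (hA1pos : 0 < A1) :
    ∀ l : ℝ, 0 < l →
      ((P[|{ω | Om * L1 ω ≤ L2 ω}]) {ω | L1 ω ≤ l}).toReal
        = (1 / A1) * ∫ t in (0:ℝ)..l,
            Real.exp (-Lam2 (Om * t) - Lam1 t) * lam1 t := by
  intro l hl
  set LamI1 : ℝ → ℝ := fun t => ∫ s in Ioc 0 t, lam1 s with hLamI1
  set LamI2 : ℝ → ℝ := fun t => ∫ s in Ioc 0 t, lam2 s with hLamI2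
  have hint1 : ∀ l : ℝ, IntegrableOn lam1 (Ioc 0 l) :=
    aux_integrableOn_of_ccdf P L1 hMeas1 Lam1 lam1 hLam1 hccdf1
  have hint2 : ∀ l : ℝ, IntegrableOn lam2 (Ioc 0 l) :=
    aux_integrableOn_of_ccdf P L2 hMeas2 Lam2 lam2 hLam2 hccdf2
  have hLam1e : ∀ t : ℝ, 0 ≤ t → Lam1 t = LamI1 t := fun t ht => by
    rw [hLam1 t ht, intervalIntegral.integral_of_le ht]
  have hLam2e : ∀ t : ℝ, 0 ≤ t → Lam2 t = LamI2 t := fun t ht => by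
    rw [hLam2 t ht, intervalIntegral.integral_of_le ht]
  have hccdf1' : ∀ t : ℝ, 0 ≤ t → (P {ω | t < L1 ω}).toReal = Real.exp (-LamI1 t) :=
    fun t ht => by rw [hccdf1 t ht, hLam1e t ht]
  have hccdf2' : ∀ t : ℝ, 0 ≤ t → (P {ω | t < L2 ω}).toReal = Real.exp (-LamI2 t) :=
    fun t ht => by rw [hccdf2 t ht, hLam2e t ht]
  have hdens1 := aux_map_restrict_eq_withDensity P L1 hMeas1 lam1 hlam1 hlam1m hint1 hccdf1'
  have hdens2 := aux_map_restrict_eq_withDensity P L2 hMeas2 lam2 hlam2 hlam2m hint2 hccdf2'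
  set μ1 := P.map L1 with hμ1
  set μ2 := P.map L2 with hμ2
  have hprob1 : IsProbabilityMeasure μ1 := Measure.isProbabilityMeasure_map hMeas1.aemeasurable
  have hprob2 : IsProbabilityMeasure μ2 := Measure.isProbabilityMeasure_map hMeas2.aemeasurable
  -- measurable monotone Lam's
  have hLmono1 : Monotone LamI1 := fun s t hst =>
    setIntegral_mono_set (hint1 t) (Filter.Eventually.of_forall fun x => hlam1 x)
      (HasSubset.Subset.eventuallyLE (Ioc_subset_Ioc_right hst))
  have hLmeas1 : Measurable LamI1 := hLmono1.measurable
  have hLmono2 : Monotone LamI2 := fun s t hst =>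
    setIntegral_mono_set (hint2 t) (Filter.Eventually.of_forall fun x => hlam2 x)
      (HasSubset.Subset.eventuallyLE (Ioc_subset_Ioc_right hst))
  have hLmeas2 : Measurable LamI2 := hLmono2.measurable
  -- atomlessness of μ2 on positive reals
  have hatom2 : ∀ c : ℝ, 0 < c → μ2 {c} = 0 := by
    intro c hc
    have h1 : μ2 {c} = (μ2.restrict (Ioi 0)) {c} := by
      rw [Measure.restrict_apply (measurableSet_singleton c)]
      congr 1
      exact (Set.inter_eq_left.2 (Set.singleton_subset_iff.2 hc)).symm
    rw [h1, hdens2, withDensity_apply _ (measurableSet_singleton c)]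
    have hz : volume.restrict ({c} : Set ℝ) = 0 := by
      rw [Measure.restrict_eq_zero]; exact Real.volume_singleton
    rw [hz, lintegral_zero_measure]
  have hμ2Ioi : ∀ c : ℝ, 0 ≤ c → μ2 (Ioi c) = ENNReal.ofReal (Real.exp (-LamI2 c)) := by
    intro c hc
    rw [hμ2, Measure.map_apply hMeas2 measurableSet_Ioi]
    have hpre : L2 ⁻¹' Ioi c = {ω | c < L2 ω} := rfl
    rw [hpre, ← ENNReal.ofReal_toReal (measure_ne_top P _), hccdf2' c hc]
  have hμ2Ici : ∀ c : ℝ, 0 < c → μ2 (Ici c) = ENNReal.ofReal (Real.exp (-LamI2 c)) := by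
    intro c hc
    have h1 : μ2 (Ici c) ≤ ENNReal.ofReal (Real.exp (-LamI2 c)) := by
      calc μ2 (Ici c) ≤ μ2 ({c} ∪ Ioi c) := measure_mono (by
            intro x hx
            rcases eq_or_lt_of_le (Set.mem_Ici.1 hx) with h | h
            · exact Or.inl (by simp [h.symm])
            · exact Or.inr h)
        _ ≤ μ2 {c} + μ2 (Ioi c) := measure_union_le _ _
        _ = ENNReal.ofReal (Real.exp (-LamI2 c)) := by
            rw [hatom2 c hc, zero_add, hμ2Ioi c hc.le]
    have h2 : ENNReal.ofReal (Real.exp (-LamI2 c)) ≤ μ2 (Ici c) := by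
      rw [← hμ2Ioi c hc.le]
      exact measure_mono Set.Ioi_subset_Ici_self
    exact le_antisymm h1 h2
  -- the integrand
  set h : ℝ → ℝ := fun t => Real.exp (-LamI2 (Om * t) - LamI1 t) * lam1 t with hh
  have hhm : Measurable h := by
    apply Measurable.mul _ hlam1m
    apply Real.measurable_exp.comp
    exact ((hLmeas2.comp (measurable_const.mul measurable_id)).neg).sub hLmeas1
  have hhnn : ∀ t, 0 ≤ h t := fun t => mul_nonneg (Real.exp_pos _).le (hlam1 t)
  -- key computation
  have key : ∀ S : Set ℝ, MeasurableSet S → S ⊆ Ioi 0 →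
      P ({ω | Om * L1 ω ≤ L2 ω} ∩ L1 ⁻¹' S) = ∫⁻ x in S, ENNReal.ofReal (h x) := by
    intro S hS hSsub
    have hpair : Measurable fun ω => (L1 ω, L2 ω) := hMeas1.prodMk hMeas2
    have hTeq : {p : ℝ × ℝ | Om * p.1 ≤ p.2 ∧ p.1 ∈ S}
        = {p : ℝ × ℝ | Om * p.1 ≤ p.2} ∩ (Prod.fst ⁻¹' S) := rfl
    have hTmeas : MeasurableSet {p : ℝ × ℝ | Om * p.1 ≤ p.2 ∧ p.1 ∈ S} := by
      rw [hTeq]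
      exact (measurableSet_le (measurable_const.mul measurable_fst) measurable_snd).inter
        (measurable_fst hS)
    have hpre : {ω | Om * L1 ω ≤ L2 ω} ∩ L1 ⁻¹' S
        = (fun ω => (L1 ω, L2 ω)) ⁻¹' {p : ℝ × ℝ | Om * p.1 ≤ p.2 ∧ p.1 ∈ S} := rfl
    rw [hpre, ← Measure.map_apply hpair hTmeas,
      (ProbabilityTheory.indepFun_iff_map_prod_eq_prod_map_map hMeas1.aemeasurable
        hMeas2.aemeasurable).1 hIndep,
      Measure.prod_apply hTmeas]
    have hfun : (fun x => μ2 (Prod.mk x ⁻¹' {p : ℝ × ℝ | Om * p.1 ≤ p.2 ∧ p.1 ∈ S}))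
        = S.indicator (fun x => μ2 (Ici (Om * x))) := by
      funext x
      by_cases hx : x ∈ S
      · rw [Set.indicator_of_mem hx]
        congr 1
        ext y
        simp [Set.mem_preimage, Set.mem_setOf_eq, hx, Set.mem_Ici]
      · rw [Set.indicator_of_notMem hx]
        have : Prod.mk x ⁻¹' {p : ℝ × ℝ | Om * p.1 ≤ p.2 ∧ p.1 ∈ S} = ∅ := by
          ext y
          simp [Set.mem_preimage, Set.mem_setOf_eq, hx]
        rw [this, measure_empty]
    rw [hfun, lintegral_indicator hS]
    have hres : μ1.restrict S = (μ1.restrict (Ioi 0)).restrict S := by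
      rw [Measure.restrict_restrict hS, Set.inter_eq_left.2 hSsub]
    have hg : Measurable fun x => μ2 (Ici (Om * x)) := by
      have : Antitone fun x => μ2 (Ici (Om * x)) := by
        intro s t hst
        exact measure_mono (Set.Ici_subset_Ici.2 (mul_le_mul_of_nonneg_left hst hOm.le))
      exact this.measurable
    calc ∫⁻ x in S, μ2 (Ici (Om * x)) ∂μ1
        = ∫⁻ x, (fun x => μ2 (Ici (Om * x))) x ∂((μ1.restrict (Ioi 0)).restrict S) := by
          rw [← hres]
      _ = ∫⁻ x in S, ((Ioi 0).indicator
            (fun t => ENNReal.ofReal (Real.exp (-LamI1 t) * lam1 t)) x)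
            * μ2 (Ici (Om * x)) ∂volume := by
          rw [hdens1, restrict_withDensity hS,
            lintegral_withDensity_eq_lintegral_mul _
              ((show Measurable fun t : ℝ =>
                  ENNReal.ofReal (Real.exp (-∫ s in Ioc 0 t, lam1 s) * lam1 t) from
                (((Real.measurable_exp.comp hLmeas1.neg).mul hlam1m).ennreal_ofReal)).indicator
                measurableSet_Ioi) hg]
          rfl
      _ = ∫⁻ x in S, ENNReal.ofReal (h x) ∂volume := by
          apply setLIntegral_congr_fun hS
          intro x hx
          have hx0 : (0:ℝ) < x := hSsub hx
          beta_reduce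
          rw [Set.indicator_of_mem (hSsub hx), hμ2Ici (Om * x) (mul_pos hOm hx0),
            ← ENNReal.ofReal_mul (mul_nonneg (Real.exp_pos _).le (hlam1 x))]
          congr 1
          have hsplit : Real.exp (-LamI2 (Om * x) - LamI1 x)
              = Real.exp (-LamI2 (Om * x)) * Real.exp (-LamI1 x) := by
            rw [← Real.exp_add]; ring_nf
          show Real.exp (-LamI1 x) * lam1 x * Real.exp (-LamI2 (Om * x)) = h x
          rw [hh]
          simp only []
          rw [hsplit]
          ring
  have hEmeas : MeasurableSet {ω | Om * L1 ω ≤ L2 ω} :=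
    measurableSet_le (measurable_const.mul hMeas1) hMeas2
  have haeIoi : ({ω | Om * L1 ω ≤ L2 ω} ∩ L1 ⁻¹' (Ioi 0) : Set α)
      =ᵐ[P] ({ω | Om * L1 ω ≤ L2 ω} : Set α) := by
    rw [Filter.eventuallyEq_set]
    filter_upwards [hPos1] with ω hω
    simp [Set.mem_inter_iff, Set.mem_preimage, Set.mem_Ioi, hω]
  have haeIoc : ({ω | Om * L1 ω ≤ L2 ω} ∩ L1 ⁻¹' (Ioc 0 l) : Set α)
      =ᵐ[P] ({ω | Om * L1 ω ≤ L2 ω} ∩ {ω | L1 ω ≤ l} : Set α) := by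
    rw [Filter.eventuallyEq_set]
    filter_upwards [hPos1] with ω hω
    simp [Set.mem_inter_iff, Set.mem_preimage, Set.mem_Ioc, Set.mem_setOf_eq, hω]
  have hkeyIoi := key (Ioi 0) measurableSet_Ioi subset_rfl
  have hintIoi : IntegrableOn h (Ioi 0) := by
    refine ⟨hhm.aestronglyMeasurable, ?_⟩
    rw [hasFiniteIntegral_iff_ofReal (Filter.Eventually.of_forall fun t => hhnn t), ← hkeyIoi]
    exact lt_of_le_of_lt (measure_mono (Set.subset_univ _)) (measure_lt_top P _)
  have hPE : P {ω | Om * L1 ω ≤ L2 ω} = ENNReal.ofReal A1 := by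
    rw [← measure_congr haeIoi, hkeyIoi, ← ofReal_integral_eq_lintegral_ofReal hintIoi
      (Filter.Eventually.of_forall fun t => hhnn t)]
    congr 1
    rw [hA1]
    apply setIntegral_congr_fun measurableSet_Ioi
    intro x hx
    have hx0 : (0:ℝ) < x := Set.mem_Ioi.1 hx
    show h x = Real.exp (-Lam2 (Om * x) - Lam1 x) * lam1 x
    rw [hLam1e x hx0.le, hLam2e (Om * x) (mul_nonneg hOm.le hx0.le)]
  have hkeyIoc := key (Ioc 0 l) measurableSet_Ioc Ioc_subset_Ioi_self
  have hintIoc : IntegrableOn h (Ioc 0 l) := hintIoi.mono_set Ioc_subset_Ioi_self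
  have hIocnn : 0 ≤ ∫ t in Ioc 0 l, h t :=
    setIntegral_nonneg measurableSet_Ioc fun t _ => hhnn t
  have hPEl : P ({ω | Om * L1 ω ≤ L2 ω} ∩ {ω | L1 ω ≤ l})
      = ENNReal.ofReal (∫ t in Ioc 0 l, h t) := by
    rw [← measure_congr haeIoc, hkeyIoc, ← ofReal_integral_eq_lintegral_ofReal hintIoc
      (Filter.Eventually.of_forall fun t => hhnn t)]
  rw [ProbabilityTheory.cond_apply hEmeas, hPE, hPEl, ENNReal.toReal_mul, ENNReal.toReal_inv,
    ENNReal.toReal_ofReal hA1pos.le, ENNReal.toReal_ofReal hIocnn, one_div,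
    intervalIntegral.integral_of_le hl.le]
  congr 1
  apply setIntegral_congr_fun measurableSet_Ioc
  intro x hx
  show h x = Real.exp (-Lam2 (Om * x) - Lam1 x) * lam1 x
  rw [hLam1e x hx.1.le, hLam2e (Om * x) (mul_nonneg hOm.le hx.1.le)]
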